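/- Let 0 < p ≤ q < ∞ and let (a_k)_{k≥1} be a sequence of real numbers with |a_1| ≥ |a_2| ≥ ⋯ such that Σ_{k≥1} |a_k|^p < ∞. Then for every N ≥ 1, (Σ_{k>N} |a_k|^q)^{1/q} ≤ N^{-1/p + 1/q} (Σ_{k≥1} |a_k|^p)^{1/p}. -/

import Mathlib

/-- **Stechkin's lemma.** For `0 < p ≤ q` and a sequence `a` (here `a k` denotes the
`(k+1)`-st term `a_{k+1}`) with nonincreasing absolute values and `p`-summable powers,
the tail sum of `q`-th powers beyond the first `N` terms obeys
`(∑_{k>N} |a_k|^q)^{1/q} ≤ N^{-1/p+1/q} (∑_{k≥1} |a_k|^p)^{1/p}`. -/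
theorem stechkin (p q : ℝ) (hp : 0 < p) (hpq : p ≤ q) (a : ℕ → ℝ)
    (hmono : Antitone fun k => |a k|) (hsum : Summable fun k => |a k| ^ p)
    (N : ℕ) (hN : 1 ≤ N) :
    (∑' k : ℕ, |a (N + k)| ^ q) ^ (1 / q) ≤
      (N : ℝ) ^ (-1 / p + 1 / q) * (∑' k : ℕ, |a k| ^ p) ^ (1 / p) := by
  have hq : 0 < q := hp.trans_le hpq
  set S := ∑' k : ℕ, |a k| ^ p with hSdef
  have hterm : ∀ k, 0 ≤ |a k| ^ p := fun k => Real.rpow_nonneg (abs_nonneg _) _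
  have hSnn : 0 ≤ S := tsum_nonneg hterm
  have hNpos : (0 : ℝ) < N := by exact_mod_cast hN
  have hkey : ∀ m : ℕ, ((m : ℝ) + 1) * |a m| ^ p ≤ S := by
    intro m
    have h1 : ((m : ℝ) + 1) * |a m| ^ p = ∑ _j ∈ Finset.range (m + 1), |a m| ^ p := by
      simp [Finset.sum_const, mul_comm]
    rw [h1]
    calc ∑ _j ∈ Finset.range (m + 1), |a m| ^ p
        ≤ ∑ j ∈ Finset.range (m + 1), |a j| ^ p := by
          apply Finset.sum_le_sum
          intro j hj
          exact Real.rpow_le_rpow (abs_nonneg _)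
            (hmono (Nat.lt_succ_iff.mp (Finset.mem_range.mp hj))) hp.le
      _ ≤ S := Summable.sum_le_tsum _ (fun k _ => hterm k) hsum
  rcases eq_or_lt_of_le hSnn with hS0 | hSpos
  · -- S = 0, hence all terms are zero
    have ha : ∀ m, |a m| = 0 := by
      intro m
      have h2 : |a m| ^ p ≤ 0 := by
        nlinarith [hterm m, hkey m, Nat.cast_nonneg (α := ℝ) m]
      have h3 : |a m| ^ p = 0 := le_antisymm h2 (hterm m)
      exact (Real.rpow_eq_zero (abs_nonneg _) hp.ne').mp h3
    have hz : (∑' k : ℕ, |a (N + k)| ^ q) = 0 := by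
      simp [ha, Real.zero_rpow hq.ne']
    rw [hz, Real.zero_rpow (by positivity : (1:ℝ)/q ≠ 0)]
    positivity
  · -- S > 0
    have haN : |a N| ^ p ≤ S / N := by
      rw [le_div_iff₀ hNpos]
      calc |a N| ^ p * N ≤ ((N : ℝ) + 1) * |a N| ^ p := by nlinarith [hterm N]
        _ ≤ S := hkey N
    have htail : Summable (fun k => |a (N + k)| ^ p) := by
      simpa [add_comm] using (summable_nat_add_iff N).mpr hsum
    have hbound : ∀ k, |a (N + k)| ^ q ≤ |a N| ^ (q - p) * |a (N + k)| ^ p := by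
      intro k
      rcases eq_or_lt_of_le (abs_nonneg (a (N + k))) with h0 | hpos
      · rw [← h0, Real.zero_rpow hq.ne']
        positivity
      · have he : |a (N + k)| ^ q = |a (N + k)| ^ (q - p) * |a (N + k)| ^ p := by
          rw [← Real.rpow_add hpos]; ring_nf
        rw [he]
        exact mul_le_mul_of_nonneg_right
          (Real.rpow_le_rpow (abs_nonneg _) (hmono (Nat.le_add_right N k)) (by linarith))
          (hterm _)
    have hsq : Summable (fun k => |a (N + k)| ^ q) :=
      Summable.of_nonneg_of_le (fun k => Real.rpow_nonneg (abs_nonneg _) _)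
        hbound (htail.mul_left _)
    have htailS : (∑' k, |a (N + k)| ^ p) ≤ S := by
      have h := Summable.sum_add_tsum_nat_add N hsum
      have h2 : (∑' k, |a (k + N)| ^ p) ≤ S := by
        rw [hSdef, ← h]
        have : 0 ≤ ∑ i ∈ Finset.range N, |a i| ^ p :=
          Finset.sum_nonneg fun i _ => hterm i
        linarith
      simpa [add_comm] using h2
    have hexp : |a N| ^ (q - p) ≤ (S / N) ^ ((q - p) / p) := by
      have h1 : |a N| ^ (q - p) = (|a N| ^ p) ^ ((q - p) / p) := by
        rw [← Real.rpow_mul (abs_nonneg _)]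
        congr 1
        field_simp
      rw [h1]
      exact Real.rpow_le_rpow (hterm N) haN (div_nonneg (by linarith) hp.le)
    have hT : (∑' k, |a (N + k)| ^ q) ≤ (S / N) ^ ((q - p) / p) * S := by
      calc (∑' k, |a (N + k)| ^ q)
          ≤ ∑' k, |a N| ^ (q - p) * |a (N + k)| ^ p :=
            Summable.tsum_le_tsum hbound hsq (htail.mul_left _)
        _ = |a N| ^ (q - p) * ∑' k, |a (N + k)| ^ p := tsum_mul_left
        _ ≤ (S / N) ^ ((q - p) / p) * S := by
            apply mul_le_mul hexp htailS (tsum_nonneg fun k => hterm _)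
              (Real.rpow_nonneg (div_nonneg hSnn hNpos.le) _)
    have hfinal : ((S / N) ^ ((q - p) / p) * S) ^ (1 / q) =
        (N : ℝ) ^ (-1 / p + 1 / q) * S ^ (1 / p) := by
      rw [Real.div_rpow hSnn hNpos.le]
      rw [div_mul_eq_mul_div]
      have hS1 : S ^ ((q - p) / p) * S = S ^ (q / p) := by
        nth_rewrite 2 [show S = S ^ (1:ℝ) from (Real.rpow_one S).symm]
        rw [← Real.rpow_add hSpos]
        congr 1
        field_simp
        ring
      rw [hS1, Real.div_rpow (Real.rpow_nonneg hSnn _) (Real.rpow_nonneg hNpos.le _),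
        ← Real.rpow_mul hSnn, ← Real.rpow_mul hNpos.le]
      rw [show q / p * (1 / q) = 1 / p by field_simp]
      rw [div_eq_mul_inv, ← Real.rpow_neg hNpos.le]
      rw [show -((q - p) / p * (1 / q)) = -1 / p + 1 / q by field_simp; ring]
      ring
    calc (∑' k : ℕ, |a (N + k)| ^ q) ^ (1 / q)
        ≤ ((S / N) ^ ((q - p) / p) * S) ^ (1 / q) :=
          Real.rpow_le_rpow (tsum_nonneg fun k => Real.rpow_nonneg (abs_nonneg _) _)
            hT (by positivity)
      _ = (N : ℝ) ^ (-1 / p + 1 / q) * S ^ (1 / p) := hfinal
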